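/- The identity Σ_{i=0}^{k-1} (-1)^i binom(k-1, i) / binom(k+i, i) = k/(2k-1) holds for every positive integer k. -/

import Mathlib

/-- `Σ_{i=0}^{k-1} (-1)^i C(k-1,i) / C(k+i,i) = k/(2k-1)` for every positive integer `k`. -/
theorem stmt_19 (k : ℕ) (hk : 1 ≤ k) :
    ∑ i ∈ Finset.range k,
        (-1 : ℚ) ^ i * ((k - 1).choose i : ℚ) / ((k + i).choose i : ℚ) =
      (k : ℚ) / (2 * (k : ℚ) - 1) := by
  have hk1 : (1:ℚ) ≤ (k:ℚ) := by exact_mod_cast hk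
  have h2k : (2 * (k:ℚ) - 1) ≠ 0 := by nlinarith
  set f : ℕ → ℚ := fun i =>
    (-1:ℚ)^i * (((i:ℚ) + k)/(2*(k:ℚ)-1)) * ((k-1).choose i : ℚ) / ((k+i).choose i : ℚ)
    with hf
  have key : ∀ i ∈ Finset.range k,
      (-1:ℚ)^i * ((k - 1).choose i : ℚ) / ((k + i).choose i : ℚ) = f i - f (i+1) := by
    intro i hi
    rw [Finset.mem_range] at hi
    have hb : ((k+i).choose i : ℚ) ≠ 0 := by
      exact_mod_cast (Nat.choose_pos (Nat.le_add_left i k)).ne'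
    have hb' : ((k+(i+1)).choose (i+1) : ℚ) ≠ 0 := by
      exact_mod_cast (Nat.choose_pos (Nat.le_add_left (i+1) k)).ne'
    -- the key natural-number identity
    have hnat : (i+k+1) * (k-1).choose (i+1) * (k+i).choose i
        = (k-1-i) * ((k-1).choose i) * (k+i+1).choose (i+1) := by
      have h1 : (k-1).choose (i+1) * (i+1) = (k-1).choose i * (k-1-i) :=
        Nat.choose_succ_right_eq (k-1) i
      have h2 : (k+i+1) * (k+i).choose i = (k+i+1).choose (i+1) * (i+1) :=
        Nat.add_one_mul_choose_eq (k+i) i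
      apply Nat.eq_of_mul_eq_mul_right (Nat.succ_pos i)
      calc (i+k+1) * (k-1).choose (i+1) * (k+i).choose i * (i+1)
          = (i+k+1) * (k+i).choose i * ((k-1).choose (i+1) * (i+1)) := by ring
        _ = (i+k+1) * (k+i).choose i * ((k-1).choose i * (k-1-i)) := by rw [h1]
        _ = (k-1-i) * (k-1).choose i * ((k+i+1) * (k+i).choose i) := by ring
        _ = (k-1-i) * (k-1).choose i * ((k+i+1).choose (i+1) * (i+1)) := by rw [h2]
        _ = (k-1-i) * ((k-1).choose i) * (k+i+1).choose (i+1) * (i+1) := by ring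
    have hm : ((k-1-i : ℕ) : ℚ) = (k:ℚ) - 1 - (i:ℚ) := by
      have : i + 1 ≤ k := hi
      push_cast [Nat.sub_sub, Nat.cast_sub (by omega : 1 + i ≤ k)]
      ring
    have hq : ((i:ℚ)+k+1) * ((k-1).choose (i+1) : ℚ) * ((k+i).choose i : ℚ)
        = ((k:ℚ)-1-(i:ℚ)) * ((k-1).choose i : ℚ) * ((k+(i+1)).choose (i+1) : ℚ) := by
      have := congrArg (fun n : ℕ => (n:ℚ)) hnat
      push_cast at this
      rw [hm] at this
      convert this using 2 <;> ring_nf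
    simp only [hf]
    rw [show k + (i+1) = k+i+1 from rfl] at hq hb' ⊢
    field_simp
    rw [eq_div_iff (by intro h; apply h2k; linarith)]
    push_cast
    linear_combination (-(-1:ℚ)^i) * hq
  rw [Finset.sum_congr rfl key, Finset.sum_range_sub' f]
  have h0 : f 0 = (k:ℚ) / (2*(k:ℚ)-1) := by
    simp [hf]
  have hfk : f k = 0 := by
    have : (k-1).choose k = 0 := Nat.choose_eq_zero_of_lt (by omega)
    simp [hf, this]
  rw [h0, hfk, sub_zero]
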